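/- With notation as above, for uniformly random A ∈ M_n and any ψ ∈ ℂ^{2ⁿ}, the random variable η_A = 2ⁿ|⟨φ_A|ψ⟩|² satisfies E[η_A²] ≤ 2‖ψ‖⁴, and hence Var(η_A) ≤ ‖ψ‖⁴. -/

import Mathlib

open scoped BigOperators ComplexConjugate

/-- Data parametrizing the set `M_n` of symmetric `n×n` integer matrices with
off-diagonal entries in `{0,1}` and diagonal entries in `{0,1,2,3}`. -/
abbrev Mdata (n : ℕ) := (Fin n → Fin 4) × (Fin n → Fin n → Bool)

/-- The matrix in `M_n` corresponding to the data `D`. -/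
def mdataMatrix {n : ℕ} (D : Mdata n) : Matrix (Fin n) (Fin n) ℤ :=
  Matrix.of fun i j =>
    if i = j then (D.1 i : ℤ) else (if D.2 (min i j) (max i j) then 1 else 0)

/-- The equatorial state `|φ_A⟩ = 2^{−n/2} Σ_x i^{xAxᵀ} |x⟩` for `A = mdataMatrix D`. -/
noncomputable def equatorial {n : ℕ} (D : Mdata n) : (Fin n → Bool) → ℂ :=
  fun x => ((Real.sqrt (2 ^ n) : ℝ) : ℂ)⁻¹ *
    Complex.I ^ (∑ i, ∑ j,
      (if x i then 1 else 0 : ℤ) * mdataMatrix D i j * (if x j then 1 else 0))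

namespace EqSM

def chi (b : Bool) : ℤ := if b then 1 else 0

def bb (b : Bool) : ℤ := if b then 1 else 0

def Qf {n : ℕ} (D : Mdata n) (x : Fin n → Bool) : ℤ :=
  ∑ i, ∑ j, chi (x i) * mdataMatrix D i j * chi (x j)

lemma equatorial_eq {n : ℕ} (D : Mdata n) (x : Fin n → Bool) :
    equatorial D x = ((Real.sqrt (2 ^ n) : ℝ) : ℂ)⁻¹ * Complex.I ^ (Qf D x) := rfl

lemma I_zpow_sum {ι : Type*} (s : Finset ι) (f : ι → ℤ) :
    Complex.I ^ (∑ i ∈ s, f i) = ∏ i ∈ s, Complex.I ^ (f i) := by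
  classical
  induction s using Finset.induction with
  | empty => simp
  | insert _ _ h ih =>
    rw [Finset.sum_insert h, Finset.prod_insert h, zpow_add₀ Complex.I_ne_zero, ih]

lemma I_zpow_four : Complex.I ^ (4:ℤ) = 1 := by
  rw [show (4:ℤ) = (4:ℕ) by norm_num, zpow_natCast, Complex.I_pow_four]

lemma I_zpow_four_mul (q : ℤ) : Complex.I ^ (4 * q) = 1 := by
  rw [zpow_mul, I_zpow_four, one_zpow]

lemma I_zpow_mod (m : ℤ) : Complex.I ^ m = Complex.I ^ (m % 4) := by
  conv_lhs => rw [← Int.emod_add_mul_ediv m 4]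
  rw [zpow_add₀ Complex.I_ne_zero, I_zpow_four_mul, mul_one]

lemma sum4 (m : ℤ) :
    (∑ v : Fin 4, Complex.I ^ ((v : ℤ) * m)) = if (4:ℤ) ∣ m then 4 else 0 := by
  have h4 : ∀ v : Fin 4, Complex.I ^ ((v:ℤ) * m) = (Complex.I ^ m) ^ (v.val) := by
    intro v
    rw [mul_comm, zpow_mul, ← zpow_natCast]
  simp only [h4]
  rw [Fin.sum_univ_four]
  have v0 : ((0:Fin 4)).val = 0 := rfl
  have v1 : ((1:Fin 4)).val = 1 := rfl
  have v2 : ((2:Fin 4)).val = 2 := rfl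
  have v3 : ((3:Fin 4)).val = 3 := rfl
  rw [v0, v1, v2, v3]
  by_cases h : (4:ℤ) ∣ m
  · obtain ⟨q, rfl⟩ := h
    rw [I_zpow_four_mul]
    norm_num
  · have hr : m % 4 = 1 ∨ m % 4 = 2 ∨ m % 4 = 3 := by
      have h1 : 0 ≤ m % 4 := Int.emod_nonneg m (by norm_num)
      have h2 : m % 4 < 4 := Int.emod_lt_of_pos m (by norm_num)
      have h0 : m % 4 ≠ 0 := fun hc => h (Int.dvd_of_emod_eq_zero hc)
      omega
    have hz : Complex.I ^ m = Complex.I ∨ Complex.I ^ m = -1 ∨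
        Complex.I ^ m = -Complex.I := by
      rcases hr with hh|hh|hh <;> rw [I_zpow_mod m, hh]
      · left; exact zpow_one _
      · right; left
        rw [show (2:ℤ) = ((2:ℕ):ℤ) by norm_num, zpow_natCast, Complex.I_sq]
      · right; right
        rw [show (3:ℤ) = ((3:ℕ):ℤ) by norm_num, zpow_natCast, pow_succ,
          Complex.I_sq]
        ring
    rw [if_neg h]
    rcases hz with hI|hI|hI <;> rw [hI] <;>
      simp [pow_succ, Complex.I_mul_I] <;> ring

lemma sumBool (k : ℤ) :
    (∑ v : Bool, Complex.I ^ (2 * bb v * k)) =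
      if (2:ℤ) ∣ k then 2 else 0 := by
  rw [Fintype.sum_bool]
  simp only [bb, if_true, if_false, mul_one, mul_zero, zero_mul, zpow_zero]
  have h2 : Complex.I ^ (2 * k) = ((-1:ℂ)) ^ k := by
    rw [zpow_mul, show (2:ℤ) = ((2:ℕ):ℤ) by norm_num, zpow_natCast, Complex.I_sq]
  rw [h2]
  by_cases h : (2:ℤ) ∣ k
  · obtain ⟨q, rfl⟩ := h
    rw [zpow_mul]
    norm_num
  · have : ((-1:ℂ)) ^ k = -1 := by
      obtain ⟨q, hq⟩ : ∃ q, k = 2*q + 1 := ⟨k/2, by omega⟩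
      rw [hq, zpow_add₀ (by norm_num : (-1:ℂ) ≠ 0), zpow_mul, zpow_one]
      norm_num
    rw [this, if_neg h]
    norm_num

lemma Qf_decomp {n : ℕ} (D : Mdata n) (x : Fin n → Bool) :
    Qf D x = (∑ i, (D.1 i : ℤ) * chi (x i))
      + ∑ i, ∑ j, (if i < j then 2 * bb (D.2 i j) * (chi (x i) * chi (x j)) else 0) := by
  have key : ∀ i j : Fin n, chi (x i) * mdataMatrix D i j * chi (x j)
      = (if i = j then (D.1 i : ℤ) * chi (x i) else 0)
        + ((if i < j then bb (D.2 i j) * (chi (x i) * chi (x j)) else 0)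
        + (if j < i then bb (D.2 j i) * (chi (x i) * chi (x j)) else 0)) := by
    intro i j
    rcases lt_trichotomy i j with h | h | h
    · rw [if_neg (ne_of_lt h), if_pos h, if_neg (asymm h)]
      simp only [mdataMatrix, Matrix.of_apply, if_neg (ne_of_lt h)]
      rw [min_eq_left h.le, max_eq_right h.le]
      unfold bb; ring
    · subst h
      simp only [lt_irrefl, if_false, if_pos rfl, add_zero]
      simp only [mdataMatrix, Matrix.of_apply, if_pos rfl]
      cases hx : x i <;> simp [chi]
    · rw [if_neg (ne_of_gt h), if_neg (asymm h), if_pos h]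
      simp only [mdataMatrix, Matrix.of_apply, if_neg (ne_of_gt h)]
      rw [min_eq_right h.le, max_eq_left h.le]
      unfold bb; ring
  unfold Qf
  simp only [key, Finset.sum_add_distrib]
  congr 1
  · simp [Finset.sum_ite_eq]
  · rw [show (∑ i : Fin n, ∑ j : Fin n,
        (if j < i then bb (D.2 j i) * (chi (x i) * chi (x j)) else 0))
      = ∑ j : Fin n, ∑ i : Fin n,
        (if j < i then bb (D.2 j i) * (chi (x i) * chi (x j)) else 0) from
        Finset.sum_comm]
    rw [← Finset.sum_add_distrib]
    apply Finset.sum_congr rfl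
    intro i _
    rw [← Finset.sum_add_distrib]
    apply Finset.sum_congr rfl
    intro j _
    split_ifs with h
    · ring
    · ring

section Master
variable {n : ℕ}

def mcoef (w x y z : Fin n → Bool) (i : Fin n) : ℤ :=
  chi (y i) + chi (z i) - chi (w i) - chi (x i)

def kcoef (w x y z : Fin n → Bool) (i j : Fin n) : ℤ :=
  chi (y i) * chi (y j) + chi (z i) * chi (z j)
    - chi (w i) * chi (w j) - chi (x i) * chi (x j)

lemma exponent_decomp (D : Mdata n) (w x y z : Fin n → Bool) :
    Qf D y + Qf D z - Qf D w - Qf D x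
      = (∑ i, (D.1 i : ℤ) * mcoef w x y z i)
        + ∑ i, ∑ j, (if i < j then 2 * bb (D.2 i j) * kcoef w x y z i j else 0) := by
  have hA : (∑ i, (D.1 i : ℤ) * mcoef w x y z i)
      = ((∑ i, (D.1 i : ℤ) * chi (y i)) + (∑ i, (D.1 i : ℤ) * chi (z i)))
        - ((∑ i, (D.1 i : ℤ) * chi (w i)) + (∑ i, (D.1 i : ℤ) * chi (x i))) := by
    rw [← Finset.sum_add_distrib, ← Finset.sum_add_distrib, ← Finset.sum_sub_distrib]
    exact Finset.sum_congr rfl (fun i _ => by unfold mcoef; ring)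
  have hB : (∑ i, ∑ j, (if i < j then 2 * bb (D.2 i j) * kcoef w x y z i j else 0))
      = ((∑ i, ∑ j, (if i < j then 2 * bb (D.2 i j) * (chi (y i) * chi (y j)) else 0))
          + (∑ i, ∑ j, (if i < j then 2 * bb (D.2 i j) * (chi (z i) * chi (z j)) else 0)))
        - ((∑ i, ∑ j, (if i < j then 2 * bb (D.2 i j) * (chi (w i) * chi (w j)) else 0))
          + (∑ i, ∑ j, (if i < j then 2 * bb (D.2 i j) * (chi (x i) * chi (x j)) else 0))) := by
    rw [← Finset.sum_add_distrib, ← Finset.sum_add_distrib, ← Finset.sum_sub_distrib]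
    apply Finset.sum_congr rfl
    intro i _
    rw [← Finset.sum_add_distrib, ← Finset.sum_add_distrib, ← Finset.sum_sub_distrib]
    apply Finset.sum_congr rfl
    intro j _
    split_ifs with h
    · unfold kcoef; ring
    · ring
  rw [hA, hB, Qf_decomp D w, Qf_decomp D x, Qf_decomp D y, Qf_decomp D z]
  ring

lemma I_exp (D : Mdata n) (w x y z : Fin n → Bool) :
    Complex.I ^ (Qf D y + Qf D z - Qf D w - Qf D x)
      = (∏ i, Complex.I ^ ((D.1 i : ℤ) * mcoef w x y z i))
        * ∏ i, ∏ j, Complex.I ^ (if i < j then 2 * bb (D.2 i j) * kcoef w x y z i j else 0) := by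
  rw [exponent_decomp, zpow_add₀ Complex.I_ne_zero]
  simp only [I_zpow_sum]

def phaseCond (w x y z : Fin n → Bool) : Prop :=
  (∀ i, (4:ℤ) ∣ mcoef w x y z i) ∧ ∀ i j : Fin n, i < j → (2:ℤ) ∣ kcoef w x y z i j

instance (w x y z : Fin n → Bool) : Decidable (phaseCond w x y z) := by
  unfold phaseCond; infer_instance

lemma card_mdata : (Fintype.card (Mdata n) : ℂ) = 4 ^ n * (2 ^ n) ^ n := by
  simp [Fintype.card_fun]

lemma sum_phase (w x y z : Fin n → Bool) :
    ∑ D : Mdata n, Complex.I ^ (Qf D y + Qf D z - Qf D w - Qf D x)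
      = (Fintype.card (Mdata n) : ℂ) * (if phaseCond w x y z then 1 else 0) := by
  simp only [I_exp]
  rw [Fintype.sum_prod_type]
  dsimp only
  rw [← Finset.sum_mul_sum]
  rw [← Fintype.prod_sum (fun (i : Fin n) (v : Fin 4) =>
        Complex.I ^ ((v : ℤ) * mcoef w x y z i))]
  rw [← Fintype.prod_sum (fun (i : Fin n) (r : Fin n → Bool) =>
        ∏ j, Complex.I ^ (if i < j then 2 * bb (r j) * kcoef w x y z i j else 0))]
  have inner : ∀ i : Fin n,
      (∑ r : Fin n → Bool, ∏ j,
          Complex.I ^ (if i < j then 2 * bb (r j) * kcoef w x y z i j else 0))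
        = ∏ j, ∑ v : Bool, Complex.I ^ (if i < j then 2 * bb v * kcoef w x y z i j else 0) := by
    intro i
    rw [Fintype.prod_sum (fun (j : Fin n) (v : Bool) =>
      Complex.I ^ (if i < j then 2 * bb v * kcoef w x y z i j else 0))]
  simp only [inner]
  have hin : ∀ i j : Fin n,
      (∑ v : Bool, Complex.I ^ (if i < j then 2 * bb v * kcoef w x y z i j else 0))
        = if i < j then (if (2:ℤ) ∣ kcoef w x y z i j then 2 else 0) else 2 := by
    intro i j
    by_cases h : i < j
    · simp only [if_pos h]
      exact sumBool _
    · simp only [if_neg h, zpow_zero]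
      rw [Fintype.sum_bool]
      norm_num
  have hsum4 : ∀ i : Fin n,
      (∑ v : Fin 4, Complex.I ^ ((v : ℤ) * mcoef w x y z i))
        = if (4:ℤ) ∣ mcoef w x y z i then 4 else 0 := fun i => sum4 _
  simp only [hin, hsum4]
  by_cases hc : phaseCond w x y z
  · rw [if_pos hc, mul_one, card_mdata]
    obtain ⟨h1, h2⟩ := hc
    rw [Finset.prod_congr rfl (fun i _ => if_pos (h1 i))]
    rw [Finset.prod_congr rfl (fun (i : Fin n) _ => Finset.prod_congr rfl
      (fun (j : Fin n) _ => show (if i < j then (if (2:ℤ) ∣ kcoef w x y z i j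
          then (2:ℂ) else 0) else 2) = 2 from by
        by_cases h : i < j
        · rw [if_pos h, if_pos (h2 i j h)]
        · rw [if_neg h]))]
    simp [Finset.prod_const, Finset.card_univ]
  · rw [if_neg hc, mul_zero]
    unfold phaseCond at hc
    push_neg at hc
    by_cases h1 : ∀ i, (4:ℤ) ∣ mcoef w x y z i
    · obtain ⟨i, j, hij, hk⟩ := hc h1
      apply mul_eq_zero_of_right
      apply Finset.prod_eq_zero (Finset.mem_univ i)
      apply Finset.prod_eq_zero (Finset.mem_univ j)
      rw [if_pos hij, if_neg hk]
    · push_neg at h1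
      obtain ⟨i, hi⟩ := h1
      apply mul_eq_zero_of_left
      apply Finset.prod_eq_zero (Finset.mem_univ i)
      rw [if_neg hi]

lemma m4 : ∀ a b c d : Bool,
    ((4:ℤ) ∣ (chi c + chi d - chi a - chi b)) ↔ ((a=c∧b=d)∨(a=d∧b=c)) := by decide

lemma bool2 : ∀ a b c d : Bool, ¬(a=c∧b=d) → ((a=c∧b=d)∨(a=d∧b=c)) →
    (a = d ∧ b = c ∧ a ≠ b) := by decide

lemma bool2' : ∀ a b c d : Bool, ¬(a=d∧b=c) → ((a=c∧b=d)∨(a=d∧b=c)) →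
    (a = c ∧ b = d ∧ a ≠ b) := by decide

lemma kodd : ∀ a b c d a' b' c' d' : Bool, a ≠ b → a' ≠ b' →
    ((a = d ∧ b = c ∧ a' = c' ∧ b' = d') ∨ (a = c ∧ b = d ∧ a' = d' ∧ b' = c')) →
    ¬ (2:ℤ) ∣ (chi c * chi c' + chi d * chi d' - chi a * chi a' - chi b * chi b') := by
  decide

lemma phaseCond_iff (w x y z : Fin n → Bool) :
    phaseCond w x y z ↔ ((w = y ∧ x = z) ∨ (w = z ∧ x = y)) := by
  constructor
  · rintro ⟨h1, h2⟩
    have hco : ∀ i, (w i = y i ∧ x i = z i) ∨ (w i = z i ∧ x i = y i) := by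
      intro i
      exact (m4 (w i) (x i) (y i) (z i)).1 (h1 i)
    by_contra hn
    push_neg at hn
    obtain ⟨hn1, hn2⟩ := hn
    have hi : ∃ i, ¬(w i = y i ∧ x i = z i) := by
      by_contra hA
      push_neg at hA
      exact hn1 (funext fun i => (hA i).1) (funext fun i => (hA i).2)
    have hj : ∃ j, ¬(w j = z j ∧ x j = y j) := by
      by_contra hA
      push_neg at hA
      exact hn2 (funext fun i => (hA i).1) (funext fun i => (hA i).2)
    obtain ⟨i, hI0⟩ := hi
    obtain ⟨j, hJ0⟩ := hj
    have hI := bool2 (w i) (x i) (y i) (z i) hI0 (hco i)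
    have hJ := bool2' (w j) (x j) (y j) (z j) hJ0 (hco j)
    have hij : i ≠ j := by
      rintro rfl
      exact hI.2.2 (hJ.1.trans hI.2.1.symm)
    rcases lt_or_gt_of_ne hij with hlt | hgt
    · exact kodd (w i) (x i) (y i) (z i) (w j) (x j) (y j) (z j) hI.2.2 hJ.2.2
        (Or.inl ⟨hI.1, hI.2.1, hJ.1, hJ.2.1⟩) (h2 i j hlt)
    · exact kodd (w j) (x j) (y j) (z j) (w i) (x i) (y i) (z i) hJ.2.2 hI.2.2
        (Or.inr ⟨hJ.1, hJ.2.1, hI.1, hI.2.1⟩) (h2 j i hgt)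
  · rintro (⟨rfl, rfl⟩ | ⟨rfl, rfl⟩) <;>
      refine ⟨fun i => ⟨0, by unfold mcoef; ring⟩,
        fun i j _ => ⟨0, by unfold kcoef; ring⟩⟩

end Master

section Assemble
variable {n : ℕ}

lemma conj_I_zpow (k : ℤ) :
    (starRingEnd ℂ) (Complex.I ^ k) = Complex.I ^ (-k) := by
  rw [map_zpow₀, Complex.conj_I, ← Complex.inv_I, inv_zpow, zpow_neg]

noncomputable def rC (n : ℕ) : ℂ := ((Real.sqrt (2 ^ n) : ℝ) : ℂ)

lemma rC_sq : rC n * rC n = (2:ℂ) ^ n := by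
  unfold rC
  rw [← Complex.ofReal_mul, Real.mul_self_sqrt (by positivity : (0:ℝ) ≤ 2 ^ n)]
  push_cast
  ring

lemma rC_ne_zero : rC n ≠ 0 := by
  unfold rC
  simp only [ne_eq, Complex.ofReal_eq_zero]
  positivity

lemma conj_equatorial (D : Mdata n) (x : Fin n → Bool) :
    conj (equatorial D x) = (rC n)⁻¹ * Complex.I ^ (-(Qf D x)) := by
  rw [equatorial_eq]
  rw [map_mul, map_inv₀, conj_I_zpow, Complex.conj_ofReal]
  rfl

lemma phi4 (D : Mdata n) (w x y z : Fin n → Bool) :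
    ((2:ℂ) ^ n) ^ 2 * ((conj (equatorial D w) * conj (equatorial D x))
        * (equatorial D y * equatorial D z))
      = Complex.I ^ (Qf D y + Qf D z - Qf D w - Qf D x) := by
  rw [conj_equatorial, conj_equatorial, equatorial_eq, equatorial_eq]
  have hr : ((2:ℂ) ^ n) ^ 2 * (((rC n)⁻¹ * (rC n)⁻¹) * ((rC n)⁻¹ * (rC n)⁻¹)) = 1 := by
    rw [← mul_inv, ← mul_inv, rC_sq]
    rw [show ((2:ℂ)^n)^2 = (2^n) * (2^n) by ring]
    field_simp
  calc ((2:ℂ) ^ n) ^ 2 * (((rC n)⁻¹ * Complex.I ^ (-(Qf D w)))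
          * ((rC n)⁻¹ * Complex.I ^ (-(Qf D x)))
        * (((rC n)⁻¹ * Complex.I ^ (Qf D y)) * ((rC n)⁻¹ * Complex.I ^ (Qf D z))))
      = (((2:ℂ) ^ n) ^ 2 * (((rC n)⁻¹ * (rC n)⁻¹) * ((rC n)⁻¹ * (rC n)⁻¹)))
        * (Complex.I ^ (-(Qf D w)) * Complex.I ^ (-(Qf D x))
          * (Complex.I ^ (Qf D y) * Complex.I ^ (Qf D z))) := by ring
    _ = Complex.I ^ (Qf D y + Qf D z - Qf D w - Qf D x) := by
        rw [hr, one_mul, ← zpow_add₀ Complex.I_ne_zero, ← zpow_add₀ Complex.I_ne_zero,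
          ← zpow_add₀ Complex.I_ne_zero]
        congr 1
        ring

lemma norm_sq_cast (zc : ℂ) : ((‖zc‖ ^ 2 : ℝ) : ℂ) = zc * conj zc := by
  rw [Complex.mul_conj]
  congr 1
  rw [Complex.sq_norm]

variable (ψ : (Fin n → Bool) → ℂ)

noncomputable def sD (D : Mdata n) : ℂ := ∑ x, conj (equatorial D x) * ψ x

lemma conj_sD (D : Mdata n) :
    conj (sD ψ D) = ∑ y, equatorial D y * conj (ψ y) := by
  unfold sD
  rw [map_sum]
  exact Finset.sum_congr rfl fun y _ => by rw [map_mul, Complex.conj_conj]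

lemma phi2 (D : Mdata n) (x y : Fin n → Bool) :
    (2:ℂ) ^ n * (conj (equatorial D x) * equatorial D y)
      = Complex.I ^ (Qf D y - Qf D x) := by
  rw [conj_equatorial, equatorial_eq]
  have hr : (2:ℂ) ^ n * ((rC n)⁻¹ * (rC n)⁻¹) = 1 := by
    rw [← mul_inv, rC_sq]
    field_simp
  calc (2:ℂ) ^ n * (((rC n)⁻¹ * Complex.I ^ (-(Qf D x))) * ((rC n)⁻¹ * Complex.I ^ (Qf D y)))
      = ((2:ℂ) ^ n * ((rC n)⁻¹ * (rC n)⁻¹)) * (Complex.I ^ (-(Qf D x)) * Complex.I ^ (Qf D y)) := by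
        ring
    _ = Complex.I ^ (Qf D y - Qf D x) := by
        rw [hr, one_mul, ← zpow_add₀ Complex.I_ne_zero]
        congr 1
        ring

lemma eta_sq_expand (D : Mdata n) :
    ((2:ℂ)^n * (sD ψ D * conj (sD ψ D)))^2
      = ∑ w, ∑ y, ∑ x, ∑ z, Complex.I ^ (Qf D y + Qf D z - Qf D w - Qf D x)
          * (ψ w * ψ x * conj (ψ y) * conj (ψ z)) := by
  have h1 : ((2:ℂ)^n * (sD ψ D * conj (sD ψ D)))^2
      = ((2:ℂ)^n)^2 * ((sD ψ D * sD ψ D) * (conj (sD ψ D) * conj (sD ψ D))) := by ring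
  rw [h1, conj_sD]
  rw [show sD ψ D * sD ψ D = ∑ w, ∑ x, (conj (equatorial D w) * ψ w)
      * (conj (equatorial D x) * ψ x) from Finset.sum_mul_sum _ _ _ _]
  rw [show ((∑ y, equatorial D y * conj (ψ y)) * (∑ z, equatorial D z * conj (ψ z)))
      = ∑ y, ∑ z, (equatorial D y * conj (ψ y)) * (equatorial D z * conj (ψ z)) from
      Finset.sum_mul_sum _ _ _ _]
  rw [Finset.sum_mul_sum, Finset.mul_sum]
  refine Finset.sum_congr rfl fun w _ => ?_
  rw [Finset.mul_sum]
  refine Finset.sum_congr rfl fun y _ => ?_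
  rw [Finset.sum_mul_sum, Finset.mul_sum]
  refine Finset.sum_congr rfl fun x _ => ?_
  rw [Finset.mul_sum]
  refine Finset.sum_congr rfl fun z _ => ?_
  rw [← phi4 D w x y z]
  ring

lemma eta_expand (D : Mdata n) :
    (2:ℂ)^n * (sD ψ D * conj (sD ψ D))
      = ∑ x, ∑ y, Complex.I ^ (Qf D y - Qf D x) * (ψ x * conj (ψ y)) := by
  rw [conj_sD]
  rw [show sD ψ D * (∑ y, equatorial D y * conj (ψ y))
      = ∑ x, ∑ y, (conj (equatorial D x) * ψ x) * (equatorial D y * conj (ψ y)) from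
      Finset.sum_mul_sum _ _ _ _]
  rw [Finset.mul_sum]
  refine Finset.sum_congr rfl fun x _ => ?_
  rw [Finset.mul_sum]
  refine Finset.sum_congr rfl fun y _ => ?_
  rw [← phi2 D x y]
  ring

lemma sum_phase1 (x y : Fin n → Bool) :
    ∑ D : Mdata n, Complex.I ^ (Qf D y - Qf D x)
      = (Fintype.card (Mdata n) : ℂ) * (if x = y then 1 else 0) := by
  have h := sum_phase x x y x
  have he : ∀ D : Mdata n, Qf D y + Qf D x - Qf D x - Qf D x = Qf D y - Qf D x :=
    fun D => by ring
  simp only [he] at h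
  rw [h]
  congr 1
  by_cases hxy : x = y
  · rw [if_pos ((phaseCond_iff _ _ _ _).2 (Or.inl ⟨hxy, rfl⟩)), if_pos hxy]
  · rw [if_neg, if_neg hxy]
    rw [phaseCond_iff]
    rintro (⟨h1, _⟩ | ⟨_, h2⟩)
    · exact hxy h1
    · exact hxy h2

lemma sum_eta (hn : True) :
    ∑ D : Mdata n, (2:ℂ)^n * (sD ψ D * conj (sD ψ D))
      = (Fintype.card (Mdata n) : ℂ) * ∑ t, ψ t * conj (ψ t) := by
  simp only [eta_expand]
  rw [Finset.sum_comm]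
  have step : ∀ x, (∑ D : Mdata n, ∑ y, Complex.I ^ (Qf D y - Qf D x) * (ψ x * conj (ψ y)))
      = ∑ y, (∑ D : Mdata n, Complex.I ^ (Qf D y - Qf D x)) * (ψ x * conj (ψ y)) := by
    intro x
    rw [Finset.sum_comm]
    exact Finset.sum_congr rfl fun y _ => by rw [← Finset.sum_mul]
  simp only [step, sum_phase1]
  rw [Finset.mul_sum]
  refine Finset.sum_congr rfl fun x _ => ?_
  rw [Finset.sum_eq_single x]
  · simp
  · intro y _ hyx
    rw [if_neg (fun hc => hyx hc.symm)]
    ring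
  · intro hx; exact absurd (Finset.mem_univ x) hx

lemma T1_eval :
    (∑ w, ∑ y, ∑ x, ∑ z, (if (w = y ∧ x = z) then (1:ℂ) else 0)
        * (ψ w * ψ x * conj (ψ y) * conj (ψ z)))
      = (∑ t, ψ t * conj (ψ t))^2 := by
  have t1 : ∀ w x y z : Fin n → Bool,
      (if (w = y ∧ x = z) then (1:ℂ) else 0) * (ψ w * ψ x * conj (ψ y) * conj (ψ z))
        = if w = y then (if x = z then ψ w * ψ x * conj (ψ y) * conj (ψ z) else 0) else 0 := by
    intro w x y z
    split_ifs <;> (try (exfalso; tauto)) <;> ring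
  simp only [t1, Finset.sum_ite_irrel, Finset.sum_const_zero, Finset.sum_ite_eq,
    Finset.mem_univ, if_true]
  rw [sq, Finset.sum_mul_sum]
  refine Finset.sum_congr rfl fun w _ => Finset.sum_congr rfl fun x _ => by ring

lemma T2_eval :
    (∑ w, ∑ y, ∑ x, ∑ z, (if (w = z ∧ x = y) then (1:ℂ) else 0)
        * (ψ w * ψ x * conj (ψ y) * conj (ψ z)))
      = (∑ t, ψ t * conj (ψ t))^2 := by
  have t2 : ∀ w x y z : Fin n → Bool,
      (if (w = z ∧ x = y) then (1:ℂ) else 0) * (ψ w * ψ x * conj (ψ y) * conj (ψ z))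
        = if x = y then (if w = z then ψ w * ψ x * conj (ψ y) * conj (ψ z) else 0) else 0 := by
    intro w x y z
    split_ifs <;> (try (exfalso; tauto)) <;> ring
  simp only [t2, Finset.sum_ite_irrel, Finset.sum_const_zero, Finset.sum_ite_eq,
    Finset.sum_ite_eq', Finset.mem_univ, if_true]
  rw [sq, Finset.sum_mul_sum]
  refine Finset.sum_congr rfl fun w _ => Finset.sum_congr rfl fun x _ => by ring

lemma T3_eval :
    (∑ w, ∑ y, ∑ x, ∑ z, (if (w = y ∧ x = z ∧ y = z) then (1:ℂ) else 0)
        * (ψ w * ψ x * conj (ψ y) * conj (ψ z)))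
      = ∑ t, (ψ t * conj (ψ t))^2 := by
  have t3 : ∀ w x y z : Fin n → Bool,
      (if (w = y ∧ x = z ∧ y = z) then (1:ℂ) else 0) * (ψ w * ψ x * conj (ψ y) * conj (ψ z))
        = if w = y then (if w = x then (if w = z then
            ψ w * ψ x * conj (ψ y) * conj (ψ z) else 0) else 0) else 0 := by
    intro w x y z
    by_cases h : (w = y ∧ x = z ∧ y = z)
    · rw [if_pos h]
      obtain ⟨h1, h2, h3⟩ := h
      subst h1; subst h2
      rw [if_pos rfl, if_pos h3, if_pos h3, one_mul]
    · rw [if_neg h, zero_mul]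
      by_cases h1 : w = y
      · rw [if_pos h1]
        by_cases h2 : w = x
        · rw [if_pos h2]
          by_cases h3 : w = z
          · exact absurd ⟨h1, h2.symm.trans h3, h1.symm.trans h3⟩ h
          · rw [if_neg h3]
        · rw [if_neg h2]
      · rw [if_neg h1]
  simp only [t3, Finset.sum_ite_irrel, Finset.sum_const_zero, Finset.sum_ite_eq,
    Finset.sum_ite_eq', Finset.mem_univ, if_true]
  refine Finset.sum_congr rfl fun t _ => by ring

lemma sum_eta_sq :
    ∑ D : Mdata n, ((2:ℂ)^n * (sD ψ D * conj (sD ψ D)))^2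
      = (Fintype.card (Mdata n) : ℂ) *
        (2 * (∑ t, ψ t * conj (ψ t))^2 - ∑ t, (ψ t * conj (ψ t))^2) := by
  simp only [eta_sq_expand]
  rw [Finset.sum_comm]
  have step : ∀ w, (∑ D : Mdata n, ∑ y, ∑ x, ∑ z,
      Complex.I ^ (Qf D y + Qf D z - Qf D w - Qf D x)
        * (ψ w * ψ x * conj (ψ y) * conj (ψ z)))
      = ∑ y, ∑ x, ∑ z, (∑ D : Mdata n, Complex.I ^ (Qf D y + Qf D z - Qf D w - Qf D x))
          * (ψ w * ψ x * conj (ψ y) * conj (ψ z)) := by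
    intro w
    rw [Finset.sum_comm]
    refine Finset.sum_congr rfl fun y _ => ?_
    rw [Finset.sum_comm]
    refine Finset.sum_congr rfl fun x _ => ?_
    rw [Finset.sum_comm]
    refine Finset.sum_congr rfl fun z _ => ?_
    rw [← Finset.sum_mul]
  simp only [step, sum_phase]
  have hsplit : ∀ w x y z : Fin n → Bool,
      ((Fintype.card (Mdata n) : ℂ) * (if phaseCond w x y z then 1 else 0))
          * (ψ w * ψ x * conj (ψ y) * conj (ψ z))
        = (Fintype.card (Mdata n) : ℂ) *
            (((if (w = y ∧ x = z) then (1:ℂ) else 0)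
                * (ψ w * ψ x * conj (ψ y) * conj (ψ z))
              + (if (w = z ∧ x = y) then (1:ℂ) else 0)
                * (ψ w * ψ x * conj (ψ y) * conj (ψ z)))
              - (if (w = y ∧ x = z ∧ y = z) then (1:ℂ) else 0)
                * (ψ w * ψ x * conj (ψ y) * conj (ψ z))) := by
    intro w x y z
    have hite : (if phaseCond w x y z then (1:ℂ) else 0)
        = if (w = y ∧ x = z) ∨ (w = z ∧ x = y) then 1 else 0 :=
      if_congr (phaseCond_iff w x y z) rfl rfl
    have hR : (w = y ∧ x = z ∧ y = z) ↔ ((w = y ∧ x = z) ∧ (w = z ∧ x = y)) := by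
      constructor
      · rintro ⟨rfl, rfl, h⟩
        exact ⟨⟨rfl, rfl⟩, h, h.symm⟩
      · rintro ⟨⟨rfl, rfl⟩, h1, h2⟩
        exact ⟨rfl, rfl, h1⟩
    have hval : (if (w = y ∧ x = z) ∨ (w = z ∧ x = y) then (1:ℂ) else 0)
        = (if (w = y ∧ x = z) then (1:ℂ) else 0) + (if (w = z ∧ x = y) then (1:ℂ) else 0)
          - (if (w = y ∧ x = z ∧ y = z) then (1:ℂ) else 0) := by
      have hR' : (if (w = y ∧ x = z ∧ y = z) then (1:ℂ) else 0)
          = if ((w = y ∧ x = z) ∧ (w = z ∧ x = y)) then (1:ℂ) else 0 :=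
        if_congr hR rfl rfl
      rw [hR']
      by_cases hP : (w = y ∧ x = z) <;> by_cases hQ : (w = z ∧ x = y) <;>
        simp [hP, hQ]
    rw [hite, hval]
    ring
  simp only [hsplit]
  simp only [← Finset.mul_sum]
  congr 1
  simp only [Finset.sum_add_distrib, Finset.sum_sub_distrib]
  rw [T1_eval, T2_eval, T3_eval]
  ring

end Assemble

end EqSM

/-- Second-moment bound for the norm estimator `η_A = 2ⁿ|⟨φ_A|ψ⟩|²` over uniformly
random equatorial states: `E[η²] ≤ 2‖ψ‖⁴` and `Var(η) ≤ ‖ψ‖⁴`. -/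
theorem equatorial_second_moment (n : ℕ) (ψ : (Fin n → Bool) → ℂ) :
    let η : Mdata n → ℝ := fun D => 2 ^ n * ‖∑ x, conj (equatorial D x) * ψ x‖ ^ 2
    ((Fintype.card (Mdata n) : ℝ))⁻¹ * (∑ D : Mdata n, η D ^ 2)
        ≤ 2 * (∑ x, ‖ψ x‖ ^ 2) ^ 2
    ∧ ((Fintype.card (Mdata n) : ℝ))⁻¹ * (∑ D : Mdata n, η D ^ 2)
          - (((Fintype.card (Mdata n) : ℝ))⁻¹ * ∑ D : Mdata n, η D) ^ 2
        ≤ (∑ x, ‖ψ x‖ ^ 2) ^ 2 := by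
  intro η
  classical
  set Nr : ℝ := ∑ x, ‖ψ x‖ ^ 2 with hNr
  set Pr : ℝ := ∑ x, (‖ψ x‖ ^ 2) ^ 2 with hPr
  have hη : ∀ D, η D = 2 ^ n * ‖EqSM.sD ψ D‖ ^ 2 := fun _ => rfl
  have nsc : ∀ z : ℂ, ((‖z‖ : ℝ) : ℂ) ^ 2 = z * conj z := fun z => by
    rw [← Complex.ofReal_pow, EqSM.norm_sq_cast]
  have hcast : ∀ D, ((η D : ℝ) : ℂ) = (2:ℂ)^n * (EqSM.sD ψ D * conj (EqSM.sD ψ D)) := by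
    intro D
    rw [hη]
    push_cast
    rw [nsc]
  have hN : ((Nr : ℝ) : ℂ) = ∑ t, ψ t * conj (ψ t) := by
    rw [hNr]
    push_cast
    exact Finset.sum_congr rfl fun t _ => nsc _
  have hP : ((Pr : ℝ) : ℂ) = ∑ t, (ψ t * conj (ψ t))^2 := by
    rw [hPr]
    push_cast
    exact Finset.sum_congr rfl fun t _ => by rw [nsc]
  have key2 : (∑ D : Mdata n, η D ^ 2)
      = (Fintype.card (Mdata n) : ℝ) * (2 * Nr ^ 2 - Pr) := by
    apply Complex.ofReal_injective
    push_cast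
    calc ∑ D : Mdata n, ((η D : ℝ) : ℂ) ^ 2
        = ∑ D : Mdata n, ((2:ℂ)^n * (EqSM.sD ψ D * conj (EqSM.sD ψ D)))^2 :=
          Finset.sum_congr rfl fun D _ => by rw [hcast]
      _ = (Fintype.card (Mdata n) : ℂ) *
          (2 * (∑ t, ψ t * conj (ψ t))^2 - ∑ t, (ψ t * conj (ψ t))^2) := EqSM.sum_eta_sq ψ
      _ = (Fintype.card (Mdata n) : ℂ) * (2 * ((Nr:ℝ):ℂ) ^ 2 - ((Pr:ℝ):ℂ)) := by
          rw [hN, hP]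
  have key1 : (∑ D : Mdata n, η D) = (Fintype.card (Mdata n) : ℝ) * Nr := by
    apply Complex.ofReal_injective
    push_cast
    calc ∑ D : Mdata n, ((η D : ℝ) : ℂ)
        = ∑ D : Mdata n, (2:ℂ)^n * (EqSM.sD ψ D * conj (EqSM.sD ψ D)) :=
          Finset.sum_congr rfl fun D _ => hcast D
      _ = (Fintype.card (Mdata n) : ℂ) * ∑ t, ψ t * conj (ψ t) := EqSM.sum_eta ψ trivial
      _ = (Fintype.card (Mdata n) : ℂ) * ((Nr:ℝ):ℂ) := by rw [hN]
  have hcpos : (0:ℝ) < (Fintype.card (Mdata n) : ℝ) := by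
    exact_mod_cast Fintype.card_pos
  have hPnn : 0 ≤ Pr := Finset.sum_nonneg fun t _ => by positivity
  rw [key1, key2, inv_mul_cancel_left₀ (ne_of_gt hcpos), inv_mul_cancel_left₀ (ne_of_gt hcpos)]
  constructor
  · nlinarith
  · nlinarith
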